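/- The Graver basis $Gr_A$ of the toric ideal $I_A$ contains the universal Gröbner basis $\mathcal{U}_A$, i.e. every binomial appearing in some reduced Gröbner basis of $I_A$ lies in $Gr_A$. -/

import Mathlib

open MvPolynomial

noncomputable section

universe u

variable {α β : Type*} [Fintype α] [Fintype β]

/-- The Laurent monomial `t^a` in the group algebra `ℂ[ℤ^α]` (the Laurent polynomial ring). -/
def laurentMonomial (a : α → ℤ) : AddMonoidAlgebra ℂ (α →₀ ℤ) :=
  AddMonoidAlgebra.single (Finsupp.equivFunOnFinite.symm a) 1

/-- The monomial map `φ_A : x_j ↦ t^{a_j}` where `a_j` is the `j`-th column of `A`. -/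
def phiMap (A : Matrix α β ℤ) : MvPolynomial β ℂ →ₐ[ℂ] AddMonoidAlgebra ℂ (α →₀ ℤ) :=
  MvPolynomial.aeval fun j => laurentMonomial fun i => A i j

/-- The toric ideal `I_A`, the kernel of `φ_A`. -/
def toricIdeal (A : Matrix α β ℤ) : Ideal (MvPolynomial β ℂ) :=
  RingHom.ker (phiMap A).toRingHom

/-- The leading monomial (exponent vector) of `f` with respect to a monomial order. -/
def leadMon (m : MonomialOrder β) (f : MvPolynomial β ℂ) : β →₀ ℕ :=
  m.toSyn.symm (f.support.sup m.toSyn)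

/-- The leading coefficient of `f` with respect to a monomial order. -/
def leadCoeff (m : MonomialOrder β) (f : MvPolynomial β ℂ) : ℂ := f.coeff (leadMon m f)

/-- `G` is a Gröbner basis of `I`: a finite set of nonzero elements of `I` whose leading
monomials generate the initial ideal of `I` (i.e. the leading monomial of every nonzero
element of `I` is divisible by the leading monomial of some element of `G`). -/
def IsGroebnerBasis (m : MonomialOrder β) (I : Ideal (MvPolynomial β ℂ))
    (G : Set (MvPolynomial β ℂ)) : Prop :=
  G.Finite ∧ (∀ g ∈ G, g ∈ I ∧ g ≠ 0) ∧
    ∀ f ∈ I, f ≠ 0 → ∃ g ∈ G, leadMon m g ≤ leadMon m f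

/-- `G` is the reduced Gröbner basis of `I`: a Gröbner basis, all of whose elements are monic,
such that no monomial occurring in an element of `G` is divisible by the leading monomial of
another element of `G`. -/
def IsReducedGroebnerBasis (m : MonomialOrder β) (I : Ideal (MvPolynomial β ℂ))
    (G : Set (MvPolynomial β ℂ)) : Prop :=
  IsGroebnerBasis m I G ∧ (∀ g ∈ G, leadCoeff m g = 1) ∧
    ∀ g ∈ G, ∀ g' ∈ G, g' ≠ g → ∀ c ∈ g.support, ¬ leadMon m g' ≤ c

/-- The positive part `w⁺` of an integer vector, as an exponent vector. -/
def posPart (w : β → ℤ) : β →₀ ℕ := Finsupp.equivFunOnFinite.symm fun i => (w i).toNat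

/-- The negative part `w⁻` of an integer vector, as an exponent vector. -/
def negPart (w : β → ℤ) : β →₀ ℕ := Finsupp.equivFunOnFinite.symm fun i => (-(w i)).toNat

/-- The binomial `x^{w⁺} - x^{w⁻}` associated to an integer vector `w`. -/
def binom (w : β → ℤ) : MvPolynomial β ℂ := monomial (posPart w) 1 - monomial (negPart w) 1

/-- A circuit of `A`: a nonzero integer vector in `ker A` with coprime entries whose support
is minimal with respect to inclusion among supports of nonzero elements of `ker A`. -/
def IsCircuit (A : Matrix α β ℤ) (u : β → ℤ) : Prop :=
  u ≠ 0 ∧ A.mulVec u = 0 ∧ Finset.gcd Finset.univ u = 1 ∧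
    ∀ v : β → ℤ, v ≠ 0 → A.mulVec v = 0 →
      {i | v i ≠ 0} ⊆ {i | u i ≠ 0} → {i | v i ≠ 0} = {i | u i ≠ 0}

/-- A sign pattern `ρ ∈ {+1,-1}^n`. -/
def IsSignPattern (ρ : β → ℤ) : Prop := ∀ i, ρ i = 1 ∨ ρ i = -1

/-- Membership in `H_ρ = ℝ^n_ρ ∩ ker_ℤ(A)`: integer kernel elements conforming to the sign
pattern `ρ`. -/
def MemH (A : Matrix α β ℤ) (ρ : β → ℤ) (w : β → ℤ) : Prop :=
  A.mulVec w = 0 ∧ ∀ i, 0 ≤ ρ i * w i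

/-- `w` belongs to the Hilbert basis of the pointed cone `H_ρ`: it is a nonzero element of
`H_ρ` which cannot be written as the sum of two nonzero elements of `H_ρ` (equivalently, it
belongs to the unique minimal generating set of the monoid `H_ρ`). -/
def IsHilbertBasisElem (A : Matrix α β ℤ) (ρ : β → ℤ) (w : β → ℤ) : Prop :=
  MemH A ρ w ∧ w ≠ 0 ∧
    ¬ ∃ a b : β → ℤ, MemH A ρ a ∧ MemH A ρ b ∧ a ≠ 0 ∧ b ≠ 0 ∧ w = a + b

/-- `w` is a Graver basis vector of `A`: a member of the Hilbert basis of `H_ρ` for some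
sign pattern `ρ`. -/
def IsGraverVector (A : Matrix α β ℤ) (w : β → ℤ) : Prop :=
  ∃ ρ : β → ℤ, IsSignPattern ρ ∧ IsHilbertBasisElem A ρ w

/-- The Graver basis `Gr_A` of the toric ideal `I_A`, as a set of binomials. -/
def graverBasis (A : Matrix α β ℤ) : Set (MvPolynomial β ℂ) :=
  { p | ∃ w : β → ℤ, IsGraverVector A w ∧ p = binom w }

/-- The degree of the binomial `x^{w⁺} - x^{w⁻}`, namely `max(Σ w⁺, Σ w⁻)`. -/
def degZ (w : β → ℤ) : ℕ := max (∑ i, (w i).toNat) (∑ i, (-(w i)).toNat)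

/-- The columns of `A` generate a pointed cone. -/
def PointedCone' (A : Matrix α β ℤ) : Prop :=
  ∀ c : β → ℚ, (∀ i, 0 ≤ c i) → (A.map (Int.cast : ℤ → ℚ)).mulVec c = 0 → c = 0

/-- The row span of `A` contains the all-ones vector. -/
def RowSpanOne (A : Matrix α β ℤ) : Prop :=
  ∃ w : α → ℚ, (A.map (Int.cast : ℤ → ℚ)).vecMul w = fun _ => 1

/-- The universal Gröbner basis of an ideal: the union of its reduced Gröbner bases over
all term orders. -/
def universalGroebnerBasis {γ : Type u} [Fintype γ] (I : Ideal (MvPolynomial γ ℂ)) :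
    Set (MvPolynomial γ ℂ) :=
  { p | ∃ (m : MonomialOrder.{u, u} γ) (G : Set (MvPolynomial γ ℂ)),
      IsReducedGroebnerBasis m I G ∧ p ∈ G }

/-- The initial ideal of `I` with respect to a monomial order: the monomial ideal generated by
the leading monomials of the nonzero elements of `I`. -/
def initialIdeal (m : MonomialOrder β) (I : Ideal (MvPolynomial β ℂ)) :
    Ideal (MvPolynomial β ℂ) :=
  Ideal.span { p | ∃ f ∈ I, f ≠ 0 ∧ p = monomial (leadMon m f) (1 : ℂ) }

set_option linter.unusedSectionVars false

section Infra

variable {α β : Type*} [Fintype α] [Fintype β]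

/-- j-th column of `A` as a finitely supported function. -/
def colF (A : Matrix α β ℤ) (j : β) : α →₀ ℤ := Finsupp.equivFunOnFinite.symm fun i => A i j

/-- Image of the exponent vector `u` under `A`. -/
def colSum (A : Matrix α β ℤ) (u : β →₀ ℕ) : α →₀ ℤ := ∑ j : β, u j • colF A j

lemma colSum_apply (A : Matrix α β ℤ) (u : β →₀ ℕ) (i : α) :
    colSum A u i = ∑ j : β, (u j : ℤ) * A i j := by
  simp [colSum, colF, Finsupp.finset_sum_apply]

lemma prod_single_one {γ : Type*} (s : Finset γ) (x : γ → (α →₀ ℤ)) :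
    (∏ j ∈ s, (AddMonoidAlgebra.single (x j) (1:ℂ) : AddMonoidAlgebra ℂ (α →₀ ℤ)))
      = AddMonoidAlgebra.single (∑ j ∈ s, x j) 1 := by
  classical
  induction s using Finset.induction_on with
  | empty => simp [AddMonoidAlgebra.one_def]
  | insert _ _ h ih =>
    rw [Finset.prod_insert h, ih, AddMonoidAlgebra.single_mul_single, Finset.sum_insert h,
      mul_one]

lemma phi_monomial (A : Matrix α β ℤ) (u : β →₀ ℕ) (c : ℂ) :
    phiMap A (monomial u c) = AddMonoidAlgebra.single (colSum A u) c := by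
  rw [phiMap, aeval_monomial]
  have h1 : (u.prod fun j k => (laurentMonomial fun i => A i j) ^ k)
      = AddMonoidAlgebra.single (colSum A u) 1 := by
    rw [Finsupp.prod_fintype _ _ (fun i => pow_zero _)]
    have : ∀ j : β, (laurentMonomial fun i => A i j) ^ (u j)
        = (AddMonoidAlgebra.single (u j • colF A j) (1:ℂ) : AddMonoidAlgebra ℂ (α →₀ ℤ)) := by
      intro j
      rw [laurentMonomial]
      rw [show (AddMonoidAlgebra.single (Finsupp.equivFunOnFinite.symm fun i => A i j) (1:ℂ))
        = AddMonoidAlgebra.single (colF A j) (1:ℂ) from rfl]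
      rw [AddMonoidAlgebra.single_pow, one_pow]
    simp_rw [this]
    rw [prod_single_one, colSum]
  rw [h1]
  rw [show (algebraMap ℂ (AddMonoidAlgebra ℂ (α →₀ ℤ))) c
      = AddMonoidAlgebra.single 0 c from rfl]
  rw [AddMonoidAlgebra.single_mul_single, zero_add, mul_one]

lemma phi_apply (A : Matrix α β ℤ) (p : MvPolynomial β ℂ) :
    phiMap A p = ∑ c ∈ p.support, AddMonoidAlgebra.single (colSum A c) (p.coeff c) := by
  conv_lhs => rw [← p.support_sum_monomial_coeff]
  rw [map_sum]
  exact Finset.sum_congr rfl fun c _ => phi_monomial A c _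

lemma mem_toricIdeal_iff (A : Matrix α β ℤ) (p : MvPolynomial β ℂ) :
    p ∈ toricIdeal A ↔ phiMap A p = 0 := Iff.rfl

lemma exists_partner (A : Matrix α β ℤ) {p : MvPolynomial β ℂ} (hp : p ∈ toricIdeal A)
    {u : β →₀ ℕ} (hu : u ∈ p.support) :
    ∃ v ∈ p.support, v ≠ u ∧ colSum A v = colSum A u := by
  classical
  by_contra hc
  push_neg at hc
  have h : phiMap A p = 0 := hp
  rw [phi_apply] at h
  have h2 := congrArg (fun q : AddMonoidAlgebra ℂ (α →₀ ℤ) => q.coeff (colSum A u)) h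
  simp only [AddMonoidAlgebra.coeff_sum, AddMonoidAlgebra.coeff_single, AddMonoidAlgebra.coeff_zero,
      Finsupp.finset_sum_apply, Finsupp.single_apply, Finsupp.coe_zero,
    Pi.zero_apply] at h2
  have h3 : (∑ x ∈ p.support, if colSum A x = colSum A u then MvPolynomial.coeff x p else 0)
      = (if colSum A u = colSum A u then MvPolynomial.coeff u p else 0) :=
    Finset.sum_eq_single u (fun c hcs hcu => if_neg (hc c hcs hcu)) (fun hh => absurd hu hh)
  rw [h3, if_pos rfl] at h2
  exact (MvPolynomial.mem_support_iff.mp hu) h2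

lemma binom_mem (A : Matrix α β ℤ) {u v : β →₀ ℕ} (h : colSum A u = colSum A v) :
    monomial u (1:ℂ) - monomial v 1 ∈ toricIdeal A := by
  rw [mem_toricIdeal_iff, map_sub, phi_monomial, phi_monomial, h, sub_self]

lemma binomial_ne_zero {u v : β →₀ ℕ} (h : u ≠ v) :
    monomial u (1:ℂ) - monomial v 1 ≠ 0 := by
  classical
  intro heq
  have hcoef : MvPolynomial.coeff u (monomial u (1:ℂ) - monomial v 1) = 1 := by
    rw [MvPolynomial.coeff_sub, MvPolynomial.coeff_monomial, MvPolynomial.coeff_monomial,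
      if_pos rfl, if_neg (fun hh : v = u => h hh.symm), sub_zero]
  rw [heq, MvPolynomial.coeff_zero] at hcoef
  exact (zero_ne_one (α := ℂ)) hcoef

lemma support_binomial_subset {u v : β →₀ ℕ} (c : β →₀ ℕ)
    (hc : c ∈ (monomial u (1:ℂ) - monomial v 1).support) : c = u ∨ c = v := by
  classical
  rw [MvPolynomial.mem_support_iff, MvPolynomial.coeff_sub, MvPolynomial.coeff_monomial,
    MvPolynomial.coeff_monomial] at hc
  by_contra hcon
  push_neg at hcon
  rw [if_neg (fun h => hcon.1 h.symm), if_neg (fun h => hcon.2 h.symm), sub_zero] at hc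
  exact hc rfl

lemma leadMon_mem (m : MonomialOrder β) {f : MvPolynomial β ℂ} (hf : f ≠ 0) :
    leadMon m f ∈ f.support := by
  obtain ⟨c, hc, hceq⟩ := f.support.exists_mem_eq_sup
    (MvPolynomial.support_nonempty.mpr hf) m.toSyn
  rw [leadMon, hceq, AddEquiv.symm_apply_apply]
  exact hc

lemma le_leadMon (m : MonomialOrder β) {f : MvPolynomial β ℂ} {c : β →₀ ℕ}
    (hc : c ∈ f.support) : m.toSyn c ≤ m.toSyn (leadMon m f) := by
  rw [leadMon, AddEquiv.apply_symm_apply]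
  exact Finset.le_sup hc

lemma eq_leadMon_of_le (m : MonomialOrder β) {f : MvPolynomial β ℂ} {c : β →₀ ℕ}
    (hc : c ∈ f.support) (h : leadMon m f ≤ c) : c = leadMon m f :=
  m.toSyn.injective (le_antisymm (le_leadMon m hc) (m.toSyn_monotone h))

lemma leadMon_binomial (m : MonomialOrder β) {x y : β →₀ ℕ} (h : x ≠ y) :
    leadMon m (monomial x (1:ℂ) - monomial y 1) = x
      ∨ leadMon m (monomial x (1:ℂ) - monomial y 1) = y :=
  support_binomial_subset _ (leadMon_mem m (binomial_ne_zero h))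

lemma pointed_imp {A : Matrix α β ℤ} (hp : PointedCone' A) (z : β → ℤ)
    (hnn : ∀ i, 0 ≤ z i) (hz : A.mulVec z = 0) : z = 0 := by
  have hmv : (A.map (Int.cast : ℤ → ℚ)).mulVec (fun i => (z i : ℚ)) = 0 := by
    funext i
    have h0 : A.mulVec z i = 0 := congrFun hz i
    simp only [Matrix.mulVec, dotProduct, Matrix.map_apply] at h0 ⊢
    have : (∑ j, ((A i j : ℚ)) * (z j : ℚ)) = ((∑ j, A i j * z j : ℤ) : ℚ) := by
      push_cast; ring
    rw [this, h0]
    simp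
  have := hp (fun i => (z i : ℚ)) (fun i => by show (0:ℚ) ≤ (z i : ℚ); exact_mod_cast hnn i) hmv
  funext i
  have h2 : ((z i : ℚ)) = 0 := congrFun this i
  exact_mod_cast h2

lemma colSum_posneg (A : Matrix α β ℤ) (z : β → ℤ) (hz : A.mulVec z = 0) :
    colSum A (_root_.posPart z) = colSum A (_root_.negPart z) := by
  ext i
  rw [colSum_apply, colSum_apply]
  have hz' : ∑ j, A i j * z j = 0 := congrFun hz i
  rw [← sub_eq_zero, ← Finset.sum_sub_distrib, ← hz']
  apply Finset.sum_congr rfl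
  intro j _
  have hpn : ((_root_.posPart z) j : ℤ) - ((_root_.negPart z) j : ℤ) = z j := by
    simp only [_root_.posPart, _root_.negPart, Finsupp.coe_equivFunOnFinite_symm]
    omega
  rw [← sub_mul, hpn, mul_comm]

end Infra

lemma colSum_add (A : Matrix α β ℤ) (x y : β →₀ ℕ) :
    colSum A (x + y) = colSum A x + colSum A y := by
  simp only [colSum, Finsupp.add_apply, add_smul, Finset.sum_add_distrib]

/-- The Graver basis `Gr_A` contains the universal Gröbner basis `𝒰_A`: every
binomial appearing in some reduced Gröbner basis of `I_A` lies in `Gr_A`. -/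
theorem graverBasis_contains_universalGroebnerBasis (d n : ℕ) (A : Matrix (Fin d) (Fin n) ℤ)
    (hrank : A.rank = d) (hpointed : PointedCone' A) (hrow : RowSpanOne A) :
    universalGroebnerBasis (toricIdeal A) ⊆ graverBasis A := by
  classical
  rintro p ⟨m, G, ⟨⟨hGfin, hGmem, hGdiv⟩, hmonic, hred⟩, hpG⟩
  obtain ⟨hpI, hp0⟩ := hGmem p hpG
  set u := leadMon m p with hu
  have hus : u ∈ p.support := leadMon_mem m hp0
  have normal : ∀ c ∈ p.support, ∀ g' ∈ G, leadMon m g' ≤ c → g' = p ∧ c = u := by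
    intro c hc g' hg' hle
    by_cases hgp : g' = p
    · exact ⟨hgp, by rw [hgp] at hle; exact eq_leadMon_of_le m hc hle⟩
    · exact absurd hle (hred p hpG g' hg' hgp c hc)
  obtain ⟨v, hvs, hvu, hcs⟩ := exists_partner A hpI hus
  have hcoefu : MvPolynomial.coeff u p = 1 := hmonic p hpG
  -- p is the binomial x^u - x^v
  have hbin : p = monomial u 1 - monomial v 1 := by
    by_contra hne
    have hqI : monomial u (1:ℂ) - monomial v 1 ∈ toricIdeal A := binom_mem A hcs.symm
    have hhI : p - (monomial u 1 - monomial v 1) ∈ toricIdeal A :=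
      Ideal.sub_mem _ hpI hqI
    have hne0 : p - (monomial u 1 - monomial v 1) ≠ 0 := sub_ne_zero.mpr hne
    obtain ⟨g', hg', hle⟩ := hGdiv _ hhI hne0
    have hlm := leadMon_mem m hne0
    have hsub : ∀ c ∈ (p - (monomial u (1:ℂ) - monomial v 1)).support,
        c ∈ p.support ∧ c ≠ u := by
      intro c hc
      rw [MvPolynomial.mem_support_iff, MvPolynomial.coeff_sub, MvPolynomial.coeff_sub,
        MvPolynomial.coeff_monomial, MvPolynomial.coeff_monomial] at hc
      by_cases hcu : c = u
      · exfalso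
        rw [hcu, if_pos rfl, if_neg (fun hh : v = u => hvu hh), hcoefu] at hc
        simp at hc
      · refine ⟨?_, hcu⟩
        by_cases hcv : c = v
        · rw [hcv]; exact hvs
        · rw [MvPolynomial.mem_support_iff]
          rw [if_neg (fun hh : u = c => hcu hh.symm),
            if_neg (fun hh : v = c => hcv hh.symm)] at hc
          simpa using hc
    obtain ⟨hcp, hcu⟩ := hsub _ hlm
    exact hcu (normal _ hcp g' hg' hle).2
  -- disjoint supports
  have hdisj : ∀ i, u i = 0 ∨ v i = 0 := by
    intro i
    by_contra hcon
    push_neg at hcon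
    obtain ⟨hui, hvi⟩ := hcon
    set u' := u - Finsupp.single i 1 with hu'
    set v' := v - Finsupp.single i 1 with hv'
    have h1 : u' + Finsupp.single i 1 = u := by
      ext j
      rw [Finsupp.add_apply, hu', Finsupp.tsub_apply, Finsupp.single_apply]
      rcases eq_or_ne i j with h | h
      · subst h; rw [if_pos rfl]; omega
      · rw [if_neg h]; omega
    have h2 : v' + Finsupp.single i 1 = v := by
      ext j
      rw [Finsupp.add_apply, hv', Finsupp.tsub_apply, Finsupp.single_apply]
      rcases eq_or_ne i j with h | h
      · subst h; rw [if_pos rfl]; omega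
      · rw [if_neg h]; omega
    have hcs' : colSum A u' = colSum A v' := by
      have h3 := hcs
      rw [← h1, ← h2, colSum_add, colSum_add] at h3
      exact (add_right_cancel h3).symm
    have huv' : u' ≠ v' := by
      intro hh
      apply hvu
      rw [← h1, ← h2, hh]
    have hqI : monomial u' (1:ℂ) - monomial v' 1 ∈ toricIdeal A := binom_mem A hcs'
    obtain ⟨g', hg', hle⟩ := hGdiv _ hqI (binomial_ne_zero huv')
    have hu'le : u' ≤ u := by rw [← h1]; exact le_self_add
    have hv'le : v' ≤ v := by rw [← h2]; exact le_self_add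
    rcases leadMon_binomial m huv' with hcase | hcase
    · rw [hcase] at hle
      have hgp := (normal u hus g' hg' (le_trans hle hu'le)).1
      rw [hgp] at hle
      have h4 : u i ≤ u' i := (Finsupp.le_def.mp hle) i
      rw [hu', Finsupp.tsub_apply, Finsupp.single_apply, if_pos rfl] at h4
      omega
    · rw [hcase] at hle
      exact hvu (normal v hvs g' hg' (le_trans hle hv'le)).2
  -- the Graver vector
  set w : Fin n → ℤ := fun i => (u i : ℤ) - (v i : ℤ) with hwdef
  have hw_pos : _root_.posPart w = u := by
    ext i
    simp only [_root_.posPart, Finsupp.coe_equivFunOnFinite_symm, hwdef]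
    rcases hdisj i with h | h <;> omega
  have hw_neg : _root_.negPart w = v := by
    ext i
    simp only [_root_.negPart, Finsupp.coe_equivFunOnFinite_symm, hwdef]
    rcases hdisj i with h | h <;> omega
  have hker : A.mulVec w = 0 := by
    funext i
    have h2 : colSum A u i = colSum A v i := by rw [hcs]
    rw [colSum_apply, colSum_apply] at h2
    simp only [Matrix.mulVec, dotProduct, Pi.zero_apply]
    have e1 : ∑ j, A i j * w j = (∑ j, (u j : ℤ) * A i j) - ∑ j, (v j : ℤ) * A i j := by
      rw [← Finset.sum_sub_distrib]
      apply Finset.sum_congr rfl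
      intro j _
      simp only [hwdef]
      ring
    rw [e1, h2, sub_self]
  have hw0 : w ≠ 0 := by
    intro hh
    apply hvu
    ext j
    have h5 := congrFun hh j
    simp only [hwdef, Pi.zero_apply] at h5
    omega
  set ρ : Fin n → ℤ := fun i => if v i = 0 then 1 else -1 with hρ
  have hsp : IsSignPattern ρ := by
    intro i; by_cases h : v i = 0 <;> simp [hρ, h]
  have hsignw : ∀ i, 0 ≤ ρ i * w i := by
    intro i
    by_cases h : v i = 0
    · simp only [hρ, if_pos h, one_mul, hwdef]; omega
    · have hu0 : u i = 0 := (hdisj i).resolve_right h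
      simp only [hρ, if_neg h, hwdef, neg_mul, one_mul, hu0]
      omega
  refine ⟨w, ⟨ρ, hsp, ⟨hker, hsignw⟩, hw0, ?_⟩, by rw [binom, hw_pos, hw_neg]; exact hbin⟩
  rintro ⟨a, b, ⟨hka, hsa⟩, ⟨hkb, hsb⟩, ha0, hb0, hab⟩
  have hsign : ∀ z : Fin n → ℤ, (∀ i, 0 ≤ ρ i * z i) → ∀ i,
      (v i = 0 → 0 ≤ z i) ∧ (v i ≠ 0 → z i ≤ 0) := by
    intro z hz i
    have h := hz i
    constructor <;> intro hv
    · simp only [hρ, if_pos hv, one_mul] at h; exact h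
    · simp only [hρ, if_neg hv, neg_mul, one_mul] at h; linarith
  have hsuma : ∀ i, a i + b i = w i := fun i => (congrFun hab i).symm
  have haUpt : ∀ i, (a i).toNat ≤ u i := by
    intro i
    have h1 := hsign a hsa i
    have h2 := hsign b hsb i
    have h3 := hsuma i
    have hwi : w i = (u i : ℤ) - v i := by simp only [hwdef]
    by_cases hv : v i = 0
    · have := h1.1 hv; have := h2.1 hv; omega
    · have := h1.2 hv; omega
  have haVpt : ∀ i, (-(a i)).toNat ≤ v i := by
    intro i
    have h1 := hsign a hsa i
    have h2 := hsign b hsb i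
    have h3 := hsuma i
    have hwi : w i = (u i : ℤ) - v i := by simp only [hwdef]
    by_cases hv : v i = 0
    · have := h1.1 hv; omega
    · have := h1.2 hv; have := h2.2 hv
      have hu0 : u i = 0 := (hdisj i).resolve_right hv
      omega
  have hsumpos : ∀ i, (a i).toNat + (b i).toNat = u i := by
    intro i
    have h1 := hsign a hsa i
    have h2 := hsign b hsb i
    have h3 := hsuma i
    have hwi : w i = (u i : ℤ) - v i := by simp only [hwdef]
    by_cases hv : v i = 0
    · have := h1.1 hv; have := h2.1 hv; omega
    · have := h1.2 hv; have := h2.2 hv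
      have hu0 : u i = 0 := (hdisj i).resolve_right hv
      omega
  have haU : _root_.posPart a ≤ u := by
    rw [Finsupp.le_def]
    intro i
    simpa only [_root_.posPart, Finsupp.coe_equivFunOnFinite_symm] using haUpt i
  have haV : _root_.negPart a ≤ v := by
    rw [Finsupp.le_def]
    intro i
    simpa only [_root_.negPart, Finsupp.coe_equivFunOnFinite_symm] using haVpt i
  have hbinaI : monomial (_root_.posPart a) (1:ℂ) - monomial (_root_.negPart a) 1
      ∈ toricIdeal A := binom_mem A (colSum_posneg A a hka)
  have hane : _root_.posPart a ≠ _root_.negPart a := by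
    intro hh
    apply ha0
    funext i
    have h6 := congrArg (fun f : Fin n →₀ ℕ => f i) hh
    simp only [_root_.posPart, _root_.negPart, Finsupp.coe_equivFunOnFinite_symm] at h6
    show a i = 0
    omega
  obtain ⟨g', hg', hle⟩ := hGdiv _ hbinaI (binomial_ne_zero hane)
  rcases leadMon_binomial m hane with hcase | hcase
  · rw [hcase] at hle
    have hgp := (normal u hus g' hg' (le_trans hle haU)).1
    rw [hgp] at hle
    have hpa : ∀ i, u i ≤ (a i).toNat := by
      intro i
      have h7 := (Finsupp.le_def.mp hle) i
      simpa only [_root_.posPart, Finsupp.coe_equivFunOnFinite_symm] using h7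
    have hbneg : ∀ i, 0 ≤ -(b i) := by
      intro i
      have h4 := hsumpos i
      have h5 := hpa i
      have h6 := haUpt i
      omega
    have hmv : A.mulVec (fun i => -(b i)) = 0 := by
      funext i
      have h8 := congrFun hkb i
      simp only [Matrix.mulVec, dotProduct, Pi.zero_apply] at h8 ⊢
      simp only [mul_neg, Finset.sum_neg_distrib, h8, neg_zero]
    have h9 := pointed_imp hpointed (fun i => -(b i)) hbneg hmv
    apply hb0
    funext i
    have h10 := congrFun h9 i
    simp only [Pi.zero_apply] at h10 ⊢
    omega
  · rw [hcase] at hle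
    exact hvu (normal v hvs g' hg' (le_trans hle haV)).2
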